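/- The set Per(S) and, for every ε ∈ Ô, the set Per_ε(S) are additive subgroups of M̄ satisfying r(Per(S)) ⊆ Per(S) and r(Per_ε(S)) ⊆ Per_ε(S) for every r ∈ R. More generally, every continuous additive group endomorphism r of M̄ with r ∘ t = t ∘ r for all t ∈ T(S) maps Per(S) into itself. -/

import Mathlib

open Set Filter Topology Pointwise

/-- The set of all finite compositions of elements of `T1`, including the identity. -/
def TS {M : Type*} [AddCommGroup M] (T1 : Set (AddMonoid.End M)) : Set (AddMonoid.End M) :=
  ↑(Submonoid.closure T1)

/-- Smallest topologically closed additive subgroup containing `Z` and stable under `R`. -/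
def Cspan {M : Type*} [AddCommGroup M] [TopologicalSpace M]
    (R : Set (AddMonoid.End M)) (Z : Set M) : Set M :=
  ⋂₀ {N : Set M | Z ⊆ N ∧ IsClosed N ∧ (∃ H : AddSubgroup M, N = ↑H) ∧
      ∀ r ∈ R, ∀ a ∈ N, r a ∈ N}

def IrrS {M : Type*} [AddCommGroup M] (T1 : Set (AddMonoid.End M)) : Set M :=
  {a | ∀ t ∈ TS T1, t a = a}

def IS {M : Type*} [AddCommGroup M] [TopologicalSpace M]
    (T1 : Set (AddMonoid.End M)) : Set M :=
  closure (AddSubgroup.closure {x : M | ∃ a : M, ∃ t ∈ TS T1, x = a - t a} : Set M)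

def Stuck {M : Type*} [AddCommGroup M] (T1 : Set (AddMonoid.End M)) (N : Set M) (a : M) :
    Prop :=
  ∀ t ∈ TS T1, t a ∈ N

def PerE {M : Type*} [AddCommGroup M] (T1 : Set (AddMonoid.End M)) (ε : Set M) : Set M :=
  {a | ∀ t1 ∈ TS T1, ∃ t2 ∈ TS T1, ∃ b ∈ IrrS T1,
    Stuck T1 {x | x - b ∈ ε} (t2 (t1 a))}

def Per {M : Type*} [AddCommGroup M] (T1 : Set (AddMonoid.End M))
    (B : ℕ → AddSubgroup M) : Set M :=
  ⋂ n, PerE T1 (B n)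

def UniqE {M : Type*} [AddCommGroup M] (T1 : Set (AddMonoid.End M)) (ε : Set M) : Set M :=
  {a | ∀ t1 ∈ TS T1, ∀ t2 ∈ TS T1, ∀ b1 ∈ IrrS T1, ∀ b2 ∈ IrrS T1,
    Stuck T1 {x | x - b1 ∈ ε} (t1 a) → Stuck T1 {x | x - b2 ∈ ε} (t2 a) → b1 - b2 ∈ ε}

def RedE {M : Type*} [AddCommGroup M] (T1 : Set (AddMonoid.End M))
    (B : ℕ → AddSubgroup M) (ε : Set M) : Set M :=
  Per T1 B ∩ UniqE T1 ε

def Red {M : Type*} [AddCommGroup M] (T1 : Set (AddMonoid.End M))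
    (B : ℕ → AddSubgroup M) : Set M :=
  ⋂ n, RedE T1 B (B n)

def Equicont {M : Type*} [AddCommGroup M] (T1 : Set (AddMonoid.End M))
    (B : ℕ → AddSubgroup M) : Prop :=
  ∀ n : ℕ, ∃ m : ℕ, ∀ t ∈ TS T1, ∀ a ∈ B m, t a ∈ B n

def DSM {M : Type*} [AddCommGroup M] [TopologicalSpace M]
    (R : Set (AddMonoid.End M)) (Y : Set M) (P : M → M → Prop) (μ : M) : Set M :=
  Cspan R {ν | ν ∈ Y ∧ P ν μ}

def Compatible {M : Type*} [AddCommGroup M] [TopologicalSpace M]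
    (R : Set (AddMonoid.End M)) (Y : Set M) (P : M → M → Prop)
    (t : AddMonoid.End M) : Prop :=
  ∀ μ ∈ Y, t μ = μ ∨ t μ ∈ DSM R Y P μ

def DIS {M : Type*} [AddCommGroup M] [TopologicalSpace M]
    (R : Set (AddMonoid.End M)) (Y : Set M) (P : M → M → Prop)
    (T1 : Set (AddMonoid.End M)) (μ : M) : Set M :=
  Cspan R {x | ∃ ν ∈ Y, P ν μ ∧ ∃ t ∈ T1, x = ν - t ν}

def TDCC {M : Type*} [AddCommGroup M] [TopologicalSpace M]
    (Y : Set M) (P : M → M → Prop) : Prop :=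
  ∀ μ : ℕ → M, (∀ n, μ n ∈ Y) → (∀ n, P (μ (n + 1)) (μ n)) →
    Filter.Tendsto μ Filter.atTop (nhds 0)


section Aux

variable {M : Type*} [AddCommGroup M] {T1 : Set (AddMonoid.End M)}

lemma TS_one : (1 : AddMonoid.End M) ∈ TS T1 := Submonoid.one_mem _

lemma TS_mul {t s : AddMonoid.End M} (ht : t ∈ TS T1) (hs : s ∈ TS T1) :
    t * s ∈ TS T1 := Submonoid.mul_mem _ ht hs

lemma IrrS_zero : (0 : M) ∈ IrrS T1 := fun t _ => map_zero t

lemma IrrS_add {a b : M} (ha : a ∈ IrrS T1) (hb : b ∈ IrrS T1) : a + b ∈ IrrS T1 :=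
  fun t ht => by rw [map_add, ha t ht, hb t ht]

lemma IrrS_neg {a : M} (ha : a ∈ IrrS T1) : -a ∈ IrrS T1 :=
  fun t ht => by rw [map_neg, ha t ht]

lemma PerE_zero (E : AddSubgroup M) : (0 : M) ∈ PerE T1 (E : Set M) := by
  intro t1 ht1
  exact ⟨1, TS_one, 0, IrrS_zero, fun t ht => by simpa using E.zero_mem⟩

lemma PerE_add (E : AddSubgroup M) {a a' : M}
    (ha : a ∈ PerE T1 (E : Set M)) (ha' : a' ∈ PerE T1 (E : Set M)) :
    a + a' ∈ PerE T1 (E : Set M) := by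
  intro t1 ht1
  obtain ⟨t2, ht2, b1, hb1, hs1⟩ := ha t1 ht1
  obtain ⟨t3, ht3, b2, hb2, hs2⟩ := ha' (t2 * t1) (TS_mul ht2 ht1)
  refine ⟨t3 * t2, TS_mul ht3 ht2, b1 + b2, IrrS_add hb1 hb2, ?_⟩
  intro t ht
  have h1 : (t * t3) (t2 (t1 a)) - b1 ∈ E := hs1 (t * t3) (TS_mul ht ht3)
  have h2 : t (t3 ((t2 * t1) a')) - b2 ∈ E := hs2 t ht
  have := E.add_mem h1 h2
  have heq : t ((t3 * t2) (t1 (a + a'))) - (b1 + b2) =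
      ((t * t3) (t2 (t1 a)) - b1) + (t (t3 ((t2 * t1) a')) - b2) := by
    show t (t3 (t2 (t1 (a + a')))) - (b1 + b2) =
      (t (t3 (t2 (t1 a))) - b1) + (t (t3 (t2 (t1 a'))) - b2)
    rw [map_add, map_add, map_add, map_add]
    abel
  show t ((t3 * t2) (t1 (a + a'))) - (b1 + b2) ∈ E
  rw [heq]
  exact this

lemma PerE_neg (E : AddSubgroup M) {a : M}
    (ha : a ∈ PerE T1 (E : Set M)) : -a ∈ PerE T1 (E : Set M) := by
  intro t1 ht1
  obtain ⟨t2, ht2, b, hb, hs⟩ := ha t1 ht1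
  refine ⟨t2, ht2, -b, IrrS_neg hb, ?_⟩
  intro t ht
  have h1 : t (t2 (t1 a)) - b ∈ E := hs t ht
  have heq : t (t2 (t1 (-a))) - (-b) = -(t (t2 (t1 a)) - b) := by
    rw [map_neg, map_neg, map_neg]; abel
  show t (t2 (t1 (-a))) - (-b) ∈ E
  rw [heq]
  exact E.neg_mem h1

/-- The subgroup with carrier `PerE T1 (B n)`. -/
def PerESubgroup (T1 : Set (AddMonoid.End M)) (E : AddSubgroup M) : AddSubgroup M where
  carrier := PerE T1 (E : Set M)
  zero_mem' := PerE_zero E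
  add_mem' := PerE_add E
  neg_mem' := PerE_neg E

lemma comm_TS (r : AddMonoid.End M) (h : ∀ t ∈ T1, ∀ a : M, r (t a) = t (r a)) :
    ∀ t ∈ TS T1, ∀ a : M, r (t a) = t (r a) := by
  intro t ht
  induction ht using Submonoid.closure_induction with
  | mem t ht => exact h t ht
  | one => intro a; rfl
  | mul s u hs hu ihs ihu =>
    intro a
    show r (s (u a)) = s (u (r a))
    rw [ihs, ihu]

lemma PerE_map (r : AddMonoid.End M)
    (hcomm : ∀ t ∈ TS T1, ∀ a : M, r (t a) = t (r a))
    (E E' : AddSubgroup M) (hmap : ∀ x ∈ E', r x ∈ E)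
    {a : M} (ha : a ∈ PerE T1 (E' : Set M)) : r a ∈ PerE T1 (E : Set M) := by
  intro t1 ht1
  obtain ⟨t2, ht2, b, hb, hs⟩ := ha t1 ht1
  refine ⟨t2, ht2, r b, fun t ht => by rw [← hcomm t ht, hb t ht], ?_⟩
  intro t ht
  have h1 : t (t2 (t1 a)) - b ∈ E' := hs t ht
  have heq : t (t2 (t1 (r a))) - r b = r (t (t2 (t1 a)) - b) := by
    rw [map_sub]
    congr 1
    rw [← hcomm t1 ht1, ← hcomm t2 ht2, ← hcomm t ht]
  show t (t2 (t1 (r a))) - r b ∈ E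
  rw [heq]
  exact hmap _ h1

end Aux

theorem Per_is_module
    {M : Type*} [AddCommGroup M] [UniformSpace M] [IsUniformAddGroup M]
    [CompleteSpace M] [T2Space M]
    (B : ℕ → AddSubgroup M)
    (hBopen : ∀ n, IsOpen (B n : Set M))
    (hBanti : ∀ n, (B (n + 1) : Set M) ⊆ (B n : Set M))
    (hBbasis : (nhds (0 : M)).HasBasis (fun _ : ℕ => True) (fun n => (B n : Set M)))
    (hBsep : ⋂ n, (B n : Set M) = {0})
    (R : Set (AddMonoid.End M))
    (hRcont : ∀ r ∈ R, Continuous r)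
    (hRsmall : ∀ r ∈ R, ∀ n : ℕ, ∀ a ∈ B n, r a ∈ B n)
    (T1 : Set (AddMonoid.End M))
    (hT1cont : ∀ t ∈ T1, Continuous t)
    (hT1comm : ∀ t ∈ T1, ∀ r ∈ R, ∀ a : M, t (r a) = r (t a)) :
    (∃ H : AddSubgroup M, (H : Set M) = Per T1 B) ∧
    (∀ n : ℕ, ∃ H : AddSubgroup M, (H : Set M) = PerE T1 (B n)) ∧
    (∀ r ∈ R, ∀ a ∈ Per T1 B, r a ∈ Per T1 B) ∧
    (∀ r ∈ R, ∀ n : ℕ, ∀ a ∈ PerE T1 (B n), r a ∈ PerE T1 (B n)) ∧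
    (∀ r : AddMonoid.End M, Continuous r →
      (∀ t ∈ TS T1, ∀ a : M, r (t a) = t (r a)) →
      ∀ a ∈ Per T1 B, r a ∈ Per T1 B) := by
  constructor
  · refine ⟨⨅ n, PerESubgroup T1 (B n), ?_⟩
    rw [AddSubgroup.coe_iInf]
    rfl
  refine ⟨fun n => ⟨PerESubgroup T1 (B n), rfl⟩, ?_, ?_, ?_⟩
  · intro r hr a ha
    have ha' : ∀ n, a ∈ PerE T1 ((B n : AddSubgroup M) : Set M) :=
      fun n => Set.mem_iInter.mp ha n
    refine Set.mem_iInter.mpr fun n => ?_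
    have hc := comm_TS r (fun t ht a => (hT1comm t ht r hr a).symm)
    exact PerE_map r hc (B n) (B n) (fun x hx => hRsmall r hr n x hx) (ha' n)
  · intro r hr n a ha
    have hc := comm_TS r (fun t ht a => (hT1comm t ht r hr a).symm)
    exact PerE_map r hc (B n) (B n) (fun x hx => hRsmall r hr n x hx) ha
  · intro r hrcont hrcomm a ha
    have ha' : ∀ n, a ∈ PerE T1 ((B n : AddSubgroup M) : Set M) :=
      fun n => Set.mem_iInter.mp ha n
    refine Set.mem_iInter.mpr fun n => ?_
    have hnhds : (B n : Set M) ∈ nhds (0 : M) := (hBopen n).mem_nhds (B n).zero_mem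
    have hpre : r ⁻¹' (B n : Set M) ∈ nhds (0 : M) := by
      have := hrcont.continuousAt (x := (0 : M))
      have h0 : r 0 = 0 := map_zero r
      simpa [ContinuousAt, h0] using this.preimage_mem_nhds (by simpa [h0] using hnhds)
    obtain ⟨m, -, hm⟩ := hBbasis.mem_iff.mp hpre
    exact PerE_map r hrcomm (B n) (B m) (fun x hx => hm hx) (ha' m)
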